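/- For every k ≥ 1, any Young diagram Y can be covered by generalized rectangles with each row and each column of Y used by at most k rectangles if and only if Y has strictly fewer than C(2k, k) steps. -/

import Mathlib

open scoped Classical

/-- The staircase Young diagram `Y_z = {(s,t) ∈ [z]×[z] : s+t ≤ z+1}`. -/
def Yd (z : ℕ) : Set (ℕ × ℕ) :=
  {p | p.1 ∈ Set.Icc 1 z ∧ p.2 ∈ Set.Icc 1 z ∧ p.1 + p.2 ≤ z + 1}

/-- A Young diagram with `r` rows and `c` columns: a down-left closed subset of `[r]×[c]`. -/
def IsYoung (r c : ℕ) (Y : Set (ℕ × ℕ)) : Prop :=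
  Y ⊆ Set.Icc 1 r ×ˢ Set.Icc 1 c ∧
  ∀ p ∈ Y, (2 ≤ p.1 → (p.1 - 1, p.2) ∈ Y) ∧ (2 ≤ p.2 → (p.1, p.2 - 1) ∈ Y)

/-- A step of `Y`: an element whose right and upper neighbours are outside `Y`. -/
def IsStep (Y : Set (ℕ × ℕ)) (p : ℕ × ℕ) : Prop :=
  p ∈ Y ∧ (p.1 + 1, p.2) ∉ Y ∧ (p.1, p.2 + 1) ∉ Y

def steps (Y : Set (ℕ × ℕ)) : Set (ℕ × ℕ) := {p | IsStep Y p}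

/-- A generalized rectangle in `Y`: a product set contained in `Y`. -/
def IsRect (Y R : Set (ℕ × ℕ)) : Prop :=
  (∃ S T : Set ℕ, R = S ×ˢ T) ∧ R ⊆ Y

/-- An actual rectangle in `Y`: a product of intervals contained in `Y`. -/
def IsActualRect (Y R : Set (ℕ × ℕ)) : Prop :=
  (∃ a b u v : ℕ, R = Set.Icc a b ×ˢ Set.Icc u v) ∧ R ⊆ Y

def UsesRow (R : Set (ℕ × ℕ)) (s : ℕ) : Prop := ∃ t, (s, t) ∈ R
def UsesCol (R : Set (ℕ × ℕ)) (t : ℕ) : Prop := ∃ s, (s, t) ∈ R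

/-- A cover of `Y` by generalized rectangles. -/
def IsCover (Y : Set (ℕ × ℕ)) (C : Finset (Set (ℕ × ℕ))) : Prop :=
  (∀ R ∈ C, IsRect Y R) ∧ (⋃ R ∈ C, R) = Y

/-- `(i,j)`-locality: each row used by at most `i`, each column by at most `j` rectangles. -/
def IsLocal (i j : ℕ) (C : Finset (Set (ℕ × ℕ))) : Prop :=
  (∀ s, (C.filter (fun R => UsesRow R s)).card ≤ i) ∧
  (∀ t, (C.filter (fun R => UsesCol R t)).card ≤ j)

def IsLocalCover (i j : ℕ) (Y : Set (ℕ × ℕ)) (C : Finset (Set (ℕ × ℕ))) : Prop :=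
  IsCover Y C ∧ IsLocal i j C

/-! ### Auxiliary definitions -/

/-- A generalized Young-diagram shape sitting above row `rl` and column `cl`. -/
def BoxLike (rl cl : ℕ) (Y : Set (ℕ × ℕ)) : Prop :=
  (∀ p ∈ Y, rl < p.1 ∧ cl < p.2) ∧
  ∀ p ∈ Y, (rl + 1 < p.1 → (p.1 - 1, p.2) ∈ Y) ∧ (cl + 1 < p.2 → (p.1, p.2 - 1) ∈ Y)

lemma BoxLike.closed {rl cl : ℕ} {Y : Set (ℕ × ℕ)} (h : BoxLike rl cl Y) :
    ∀ a b a' b', (a, b) ∈ Y → rl < a' → a' ≤ a → cl < b' → b' ≤ b → (a', b') ∈ Y := by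
  have hrow : ∀ d a b, (a, b) ∈ Y → rl < a - d → (a - d, b) ∈ Y := by
    intro d
    induction d with
    | zero => intro a b hab _; simpa using hab
    | succ d ih =>
      intro a b hab hlt
      have h2 := ih a b hab (by omega)
      have h3 : rl + 1 < a - d := by omega
      have h4 := (h.2 _ h2).1 h3
      have he : a - d - 1 = a - (d + 1) := by omega
      simpa [he] using h4
  have hcol : ∀ d a b, (a, b) ∈ Y → cl < b - d → (a, b - d) ∈ Y := by
    intro d
    induction d with
    | zero => intro a b hab _; simpa using hab
    | succ d ih =>
      intro a b hab hlt
      have h2 := ih a b hab (by omega)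
      have h3 : cl + 1 < b - d := by omega
      have h4 := (h.2 _ h2).2 h3
      have he : b - d - 1 = b - (d + 1) := by omega
      simpa [he] using h4
  intro a b a' b' hab ha1 ha2 hb1 hb2
  have h1 : (a', b) ∈ Y := by
    have := hrow (a - a') a b hab (by omega)
    have he : a - (a - a') = a' := by omega
    simpa [he] using this
  have := hcol (b - b') a' b h1 (by omega)
  have he : b - (b - b') = b' := by omega
  simpa [he] using this

lemma step_antichain {rl cl : ℕ} {Y : Set (ℕ × ℕ)} (h : BoxLike rl cl Y) {p q : ℕ × ℕ}
    (hp : IsStep Y p) (hq : IsStep Y q) (hlt : p.1 < q.1) : q.2 < p.2 := by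
  by_contra hcon
  push_neg at hcon
  have hb := h.1 p hp.1
  have : (p.1 + 1, p.2) ∈ Y :=
    h.closed q.1 q.2 (p.1 + 1) p.2 (by simpa using hq.1) (by omega) (by omega) hb.2 hcon
  exact hp.2.1 this

lemma step_row_inj {rl cl : ℕ} {Y : Set (ℕ × ℕ)} (h : BoxLike rl cl Y) {p q : ℕ × ℕ}
    (hp : IsStep Y p) (hq : IsStep Y q) (he : p.1 = q.1) : p = q := by
  have hbp := h.1 p hp.1
  have hbq := h.1 q hq.1
  rcases lt_trichotomy p.2 q.2 with hlt | heq | hlt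
  · exfalso
    have : (p.1, p.2 + 1) ∈ Y :=
      h.closed q.1 q.2 p.1 (p.2 + 1) (by simpa using hq.1) hbp.1 (by omega) (by omega) (by omega)
    exact hp.2.2 this
  · exact Prod.ext he heq
  · exfalso
    have : (q.1, q.2 + 1) ∈ Y :=
      h.closed p.1 p.2 q.1 (q.2 + 1) (by simpa using hp.1) hbq.1 (by omega) (by omega) (by omega)
    exact hq.2.2 this

lemma exists_kth : ∀ (m : ℕ) (S : Finset ℕ), m < S.card →
    ∃ r ∈ S, (S.filter (· < r)).card = m := by
  intro m
  induction m with
  | zero =>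
    intro S hS
    have hne : S.Nonempty := Finset.card_pos.mp (by omega)
    refine ⟨S.min' hne, S.min'_mem hne, ?_⟩
    rw [Finset.card_eq_zero, Finset.filter_eq_empty_iff]
    intro x hx
    exact not_lt.mpr (S.min'_le x hx)
  | succ m ih =>
    intro S hS
    have hne : S.Nonempty := Finset.card_pos.mp (by omega)
    set r0 := S.min' hne with hr0
    have hr0m : r0 ∈ S := S.min'_mem hne
    have hcard : m < (S.erase r0).card := by
      rw [Finset.card_erase_of_mem hr0m]; omega
    obtain ⟨r, hr, hcnt⟩ := ih (S.erase r0) hcard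
    have hrS : r ∈ S := (Finset.mem_erase.mp hr).2
    have hrne : r ≠ r0 := (Finset.mem_erase.mp hr).1
    have hr0r : r0 < r := lt_of_le_of_ne (S.min'_le r hrS) (Ne.symm hrne)
    refine ⟨r, hrS, ?_⟩
    have hins : S.filter (· < r) = insert r0 ((S.erase r0).filter (· < r)) := by
      ext x
      simp only [Finset.mem_filter, Finset.mem_insert, Finset.mem_erase]
      constructor
      · rintro ⟨hx, hxr⟩
        by_cases hx0 : x = r0
        · exact Or.inl hx0
        · exact Or.inr ⟨⟨hx0, hx⟩, hxr⟩
      · rintro (rfl | ⟨⟨_, hx⟩, hxr⟩)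
        · exact ⟨hr0m, hr0r⟩
        · exact ⟨hx, hxr⟩
    rw [hins, Finset.card_insert_of_notMem (by simp), hcnt]

lemma exists_step_rank {rl cl : ℕ} {Y : Set (ℕ × ℕ)} (hbox : BoxLike rl cl Y)
    (hsf : (steps Y).Finite) {m : ℕ} (hm : m < (steps Y).ncard) :
    ∃ p ∈ steps Y, (hsf.toFinset.filter (fun q => q.1 < p.1)).card = m := by
  classical
  have hmemSF : ∀ q, q ∈ hsf.toFinset ↔ q ∈ steps Y := fun q => Set.Finite.mem_toFinset hsf
  have hinj : ∀ p ∈ hsf.toFinset, ∀ q ∈ hsf.toFinset, p.1 = q.1 → p = q := by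
    intro p hp q hq h
    exact step_row_inj hbox ((hmemSF p).mp hp) ((hmemSF q).mp hq) h
  have hcard : (hsf.toFinset.image Prod.fst).card = hsf.toFinset.card :=
    Finset.card_image_of_injOn hinj
  have hn : (steps Y).ncard = hsf.toFinset.card := Set.ncard_eq_toFinset_card _ hsf
  obtain ⟨r, hr, hcnt⟩ := exists_kth m (hsf.toFinset.image Prod.fst) (by omega)
  obtain ⟨p, hpSF, hpr⟩ := Finset.mem_image.mp hr
  refine ⟨p, (hmemSF p).mp hpSF, ?_⟩
  subst hpr
  have himg : (hsf.toFinset.image Prod.fst).filter (· < p.1)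
      = (hsf.toFinset.filter (fun q => q.1 < p.1)).image Prod.fst := by
    ext x
    simp only [Finset.mem_filter, Finset.mem_image]
    constructor
    · rintro ⟨⟨q, hq, rfl⟩, hxr⟩
      exact ⟨q, ⟨hq, hxr⟩, rfl⟩
    · rintro ⟨q, ⟨hq, hxr⟩, rfl⟩
      exact ⟨⟨q, hq, rfl⟩, hxr⟩
  rw [himg] at hcnt
  rw [← hcnt]
  exact (Finset.card_image_of_injOn (fun a ha b hb hab =>
    hinj a (Finset.filter_subset _ _ ha) b (Finset.filter_subset _ _ hb) hab)).symm

/-! ### The core set-pair lemma -/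

lemma core {α : Type*} :
    ∀ (s : ℕ) (i j n : ℕ) (A B : ℕ → Finset α), i + j ≤ s →
      (∀ m, m < n → (A m).card ≤ i) →
      (∀ m, m < n → (B m).card ≤ j) →
      (∀ a b, a ≤ b → b < n → (A a ∩ B b).Nonempty) →
      (∀ a b, b < a → a < n → A a ∩ B b = ∅) →
      n < (i + j).choose i := by
  classical
  intro s
  induction s with
  | zero =>
    intro i j n A B hs hA hB hne _
    have hi : i = 0 := by omega
    have hj : j = 0 := by omega
    subst hi; subst hj
    rcases Nat.eq_zero_or_pos n with h | h
    · simp [h]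
    · exfalso
      obtain ⟨x, hx⟩ := hne 0 0 le_rfl h
      have h1 := hA 0 h
      have h2 : 0 < (A 0).card :=
        Finset.card_pos.mpr ⟨x, (Finset.mem_inter.mp hx).1⟩
      omega
  | succ s ihs =>
    intro i j n A B hs hA hB hne hdisj
    rcases Nat.eq_zero_or_pos n with hn0 | hn0
    · have := Nat.choose_pos (Nat.le_add_right i j)
      omega
    rcases Nat.eq_zero_or_pos i with hi0 | hi0
    · exfalso
      obtain ⟨x, hx⟩ := hne 0 0 le_rfl hn0
      have h1 := hA 0 hn0
      have h2 : 0 < (A 0).card :=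
        Finset.card_pos.mpr ⟨x, (Finset.mem_inter.mp hx).1⟩
      omega
    rcases Nat.eq_zero_or_pos j with hj0 | hj0
    · exfalso
      obtain ⟨x, hx⟩ := hne 0 0 le_rfl hn0
      have h1 := hB 0 hn0
      have h2 : 0 < (B 0).card :=
        Finset.card_pos.mpr ⟨x, (Finset.mem_inter.mp hx).2⟩
      omega
    obtain ⟨ii, rfl⟩ : ∃ ii, i = ii + 1 := ⟨i - 1, by omega⟩
    obtain ⟨jj, rfl⟩ : ∃ jj, j = jj + 1 := ⟨j - 1, by omega⟩
    set P : ℕ → Prop := fun q => ∀ a, a < q →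
      (A a).card < ii + 1 ∨ ∃ x ∈ A a, ∀ b, a ≤ b → b < q → x ∉ B b with hPdef
    have hP0 : P 0 := fun a ha => absurd ha (Nat.not_lt_zero a)
    set Q := Nat.findGreatest P n with hQdef
    have hPQ : P Q := Nat.findGreatest_spec (Nat.zero_le n) hP0
    have hQn : Q ≤ n := Nat.findGreatest_le n
    -- any prefix where P holds is short
    have hpre : ∀ q, q ≤ n → P q → q < (ii + (jj + 1)).choose ii := by
      intro q hqn hPq
      set A' : ℕ → Finset α := fun a =>
        if h : ∃ x ∈ A a, ∀ b, a ≤ b → b < q → x ∉ B b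
        then (A a).erase h.choose else A a with hA'def
      refine ihs ii (jj + 1) q A' B (by omega) ?_ ?_ ?_ ?_
      · intro a haq
        by_cases h : ∃ x ∈ A a, ∀ b, a ≤ b → b < q → x ∉ B b
        · have hx := h.choose_spec.1
          have hc := Finset.card_erase_of_mem hx
          have hcA : (A a).card ≤ ii + 1 := hA a (lt_of_lt_of_le haq hqn)
          simp only [hA'def, dif_pos h]
          omega
        · rcases hPq a haq with hlt | hex
          · simp only [hA'def, dif_neg h]
            omega
          · exact absurd hex h
      · intro m hm; exact hB m (lt_of_lt_of_le hm hqn)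
      · intro a b hab hbq
        obtain ⟨z, hz⟩ := hne a b hab (lt_of_lt_of_le hbq hqn)
        rw [Finset.mem_inter] at hz
        refine ⟨z, Finset.mem_inter.mpr ⟨?_, hz.2⟩⟩
        by_cases h : ∃ x ∈ A a, ∀ b, a ≤ b → b < q → x ∉ B b
        · simp only [hA'def, dif_pos h]
          refine Finset.mem_erase.mpr ⟨?_, hz.1⟩
          intro hzx
          exact (h.choose_spec.2 b hab hbq) (hzx ▸ hz.2)
        · simp only [hA'def, dif_neg h]
          exact hz.1
      · intro a b hba haq
        have h0 := hdisj a b hba (lt_of_lt_of_le haq hqn)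
        have hsub : A' a ∩ B b ⊆ A a ∩ B b := by
          apply Finset.inter_subset_inter_right
          by_cases h : ∃ x ∈ A a, ∀ b, a ≤ b → b < q → x ∉ B b
          · simp only [hA'def, dif_pos h]
            exact Finset.erase_subset _ _
          · simp only [hA'def, dif_neg h]
            exact subset_rfl
        rw [← Finset.subset_empty, ← h0]
        exact hsub
    have hpascal : (ii + 1 + (jj + 1)).choose (ii + 1)
        = (ii + (jj + 1)).choose ii + (ii + (jj + 1)).choose (ii + 1) := by
      have h1 : ii + 1 + (jj + 1) = (ii + (jj + 1)) + 1 := by omega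
      rw [h1, Nat.choose_succ_succ]
    rcases eq_or_lt_of_le hQn with hQeq | hQlt
    · -- Q = n : the whole sequence is short
      have := hpre n le_rfl (hQeq ▸ hPQ)
      omega
    -- Q < n
    have hQb := hpre Q hQn hPQ
    have hnP : ¬ P (Q + 1) := Nat.findGreatest_is_greatest (n := n) (by omega) (by omega)
    replace hnP : ¬ ∀ a, a < Q + 1 →
        ((A a).card < ii + 1 ∨ ∃ x ∈ A a, ∀ b, a ≤ b → b < Q + 1 → x ∉ B b) := hnP
    push_neg at hnP
    obtain ⟨a0, ha0, hcard0, hcov⟩ := hnP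
    -- suffix property
    have hsuf : ∀ b, Q < b → b < n →
        (B b).card ≤ jj ∨ ∃ y ∈ B b, ∀ a, Q + 1 ≤ a → a ≤ b → y ∉ A a := by
      intro b hQb' hbn
      by_contra hcon
      push_neg at hcon
      obtain ⟨hcard, hcov2⟩ := hcon
      obtain ⟨z, hz⟩ := hne a0 b (by omega) hbn
      rw [Finset.mem_inter] at hz
      obtain ⟨b', hab', hb'Q, hzb'⟩ := hcov z hz.1
      obtain ⟨a', ha'1, ha'2, hza'⟩ := hcov2 z hz.2
      have hd : A a' ∩ B b' = ∅ := hdisj a' b' (by omega) (by omega)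
      have : z ∈ A a' ∩ B b' := Finset.mem_inter.mpr ⟨hza', hzb'⟩
      rw [hd] at this
      exact absurd this (Finset.notMem_empty z)
    -- suffix system
    set B₂ : ℕ → Finset α := fun m =>
      if h : ∃ y ∈ B (Q + 1 + m), ∀ a, Q + 1 ≤ a → a ≤ Q + 1 + m → y ∉ A a
      then (B (Q + 1 + m)).erase h.choose else B (Q + 1 + m) with hB₂def
    have hsufb : n - (Q + 1) < (ii + 1 + jj).choose (ii + 1) := by
      refine ihs (ii + 1) jj (n - (Q + 1)) (fun m => A (Q + 1 + m)) B₂ (by omega) ?_ ?_ ?_ ?_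
      · intro m hm; exact hA _ (by omega)
      · intro m hm
        rcases hsuf (Q + 1 + m) (by omega) (by omega) with hle | hex
        · by_cases h : ∃ y ∈ B (Q + 1 + m), ∀ a, Q + 1 ≤ a → a ≤ Q + 1 + m → y ∉ A a
          · have hy := h.choose_spec.1
            have hc := Finset.card_erase_of_mem hy
            simp only [hB₂def, dif_pos h]
            omega
          · simp only [hB₂def, dif_neg h]
            exact hle
        · have h : ∃ y ∈ B (Q + 1 + m), ∀ a, Q + 1 ≤ a → a ≤ Q + 1 + m → y ∉ A a := hex
          have hy := h.choose_spec.1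
          have hc := Finset.card_erase_of_mem hy
          have hcB : (B (Q + 1 + m)).card ≤ jj + 1 := hB _ (by omega)
          simp only [hB₂def, dif_pos h]
          omega
      · intro a b hab hbq
        obtain ⟨z, hz⟩ := hne (Q + 1 + a) (Q + 1 + b) (by omega) (by omega)
        rw [Finset.mem_inter] at hz
        refine ⟨z, Finset.mem_inter.mpr ⟨hz.1, ?_⟩⟩
        by_cases h : ∃ y ∈ B (Q + 1 + b), ∀ a, Q + 1 ≤ a → a ≤ Q + 1 + b → y ∉ A a
        · simp only [hB₂def, dif_pos h]
          refine Finset.mem_erase.mpr ⟨?_, hz.2⟩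
          intro hzy
          exact (h.choose_spec.2 (Q + 1 + a) (by omega) (by omega)) (hzy ▸ hz.1)
        · simp only [hB₂def, dif_neg h]
          exact hz.2
      · intro a b hba haq
        have h0 := hdisj (Q + 1 + a) (Q + 1 + b) (by omega) (by omega)
        have hsub : A (Q + 1 + a) ∩ B₂ b ⊆ A (Q + 1 + a) ∩ B (Q + 1 + b) := by
          refine Finset.inter_subset_inter subset_rfl ?_
          by_cases h : ∃ y ∈ B (Q + 1 + b), ∀ a, Q + 1 ≤ a → a ≤ Q + 1 + b → y ∉ A a
          · simp only [hB₂def, dif_pos h]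
            exact Finset.erase_subset _ _
          · simp only [hB₂def, dif_neg h]
            exact subset_rfl
        rw [← Finset.subset_empty, ← h0]
        exact hsub
    have e1 : ii + 1 + jj = ii + (jj + 1) := by omega
    rw [e1] at hsufb
    omega

/-! ### Direction 1: a local cover bounds the number of steps -/

lemma forward {k rl cl : ℕ} {Y : Set (ℕ × ℕ)} (hbox : BoxLike rl cl Y) (hfin : Y.Finite)
    (C : Finset (Set (ℕ × ℕ))) (h : IsLocalCover k k Y C) :
    (steps Y).ncard < (2 * k).choose k := by
  classical
  have hsf : (steps Y).Finite := hfin.subset (fun p hp => hp.1)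
  set n := (steps Y).ncard with hn
  have he : ∀ m, m < n → ∃ p ∈ steps Y,
      (hsf.toFinset.filter (fun q => q.1 < p.1)).card = m :=
    fun m hm => exists_step_rank hbox hsf hm
  set e : ℕ → ℕ × ℕ := fun m => if hm : m < n then (he m hm).choose else (0, 0) with hedef
  have hestep : ∀ m, m < n → e m ∈ steps Y := by
    intro m hm
    simp only [hedef, dif_pos hm]
    exact (he m hm).choose_spec.1
  have herank : ∀ m, m < n → (hsf.toFinset.filter (fun q => q.1 < (e m).1)).card = m := by
    intro m hm
    simp only [hedef, dif_pos hm]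
    exact (he m hm).choose_spec.2
  have hrowmono : ∀ a b, a < b → b < n → (e a).1 < (e b).1 := by
    intro a b hab hbn
    have han : a < n := by omega
    rcases lt_trichotomy (e a).1 (e b).1 with h1 | h1 | h1
    · exact h1
    · exfalso
      have heq := step_row_inj hbox (hestep a han) (hestep b hbn) h1
      have := herank a han
      rw [heq, herank b hbn] at this
      omega
    · exfalso
      have hsub : hsf.toFinset.filter (fun q => q.1 < (e b).1)
          ⊆ hsf.toFinset.filter (fun q => q.1 < (e a).1) := by
        intro q hq
        rw [Finset.mem_filter] at hq ⊢
        exact ⟨hq.1, by omega⟩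
      have hcc := Finset.card_le_card hsub
      rw [herank a han, herank b hbn] at hcc
      omega
  have hbnd : ∀ m, m < n → rl < (e m).1 ∧ cl < (e m).2 :=
    fun m hm => hbox.1 (e m) (hestep m hm).1
  have hcolmono : ∀ a b, a < b → b < n → (e b).2 < (e a).2 := by
    intro a b hab hbn
    exact step_antichain hbox (hestep a (by omega)) (hestep b hbn) (hrowmono a b hab hbn)
  have hcore := core (k + k) k k n
    (fun m => C.filter (fun R => UsesRow R (e m).1))
    (fun m => C.filter (fun R => UsesCol R (e m).2))
    le_rfl
    (fun m _ => by exact h.2.1 (e m).1)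
    (fun m _ => by exact h.2.2 (e m).2)
    ?hne ?hdisj
  · rwa [two_mul, hn]
  case hne =>
    intro a b hab hbn
    have han : a < n := by omega
    have hz : ((e a).1, (e b).2) ∈ Y := by
      rcases eq_or_lt_of_le hab with rfl | hlt
      · simpa using (hestep a han).1
      · exact hbox.closed (e a).1 (e a).2 (e a).1 (e b).2 (by simpa using (hestep a han).1)
          (hbnd a han).1 le_rfl (hbnd b hbn).2 (le_of_lt (hcolmono a b hlt hbn))
    rw [← h.1.2] at hz
    simp only [Set.mem_iUnion] at hz
    obtain ⟨R, hRC, hzR⟩ := hz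
    exact ⟨R, Finset.mem_inter.mpr ⟨Finset.mem_filter.mpr ⟨hRC, ⟨(e b).2, hzR⟩⟩,
      Finset.mem_filter.mpr ⟨hRC, ⟨(e a).1, hzR⟩⟩⟩⟩
  case hdisj =>
    intro a b hba han
    rw [Finset.eq_empty_iff_forall_notMem]
    intro R hR
    rw [Finset.mem_inter, Finset.mem_filter, Finset.mem_filter] at hR
    obtain ⟨⟨hRC, t0, ht0⟩, ⟨_, s0, hs0⟩⟩ := hR
    obtain ⟨⟨S, T, rfl⟩, hsub⟩ := h.1.1 R hRC
    have hz : ((e a).1, (e b).2) ∈ S ×ˢ T := ⟨ht0.1, hs0.2⟩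
    have hzY := hsub hz
    have hbn : b < n := by omega
    have hrowlt : (e b).1 < (e a).1 := hrowmono b a hba han
    exact (hestep b hbn).2.1 (hbox.closed (e a).1 (e b).2 ((e b).1 + 1) (e b).2 hzY
      (by have := (hbnd b hbn).1; omega) (by omega) (hbnd b hbn).2 le_rfl)

/-! ### Direction 2: constructing a local cover -/

lemma build : ∀ (n i j rl cl : ℕ) (Y : Set (ℕ × ℕ)), Y.Finite → BoxLike rl cl Y →
    (steps Y).ncard = n → n < (i + j).choose i →
    ∃ C : Finset (Set (ℕ × ℕ)), (∀ R ∈ C, IsRect Y R) ∧ (⋃ R ∈ C, R) = Y ∧ IsLocal i j C := by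
  classical
  intro n
  induction n using Nat.strong_induction_on with
  | _ n IH =>
  intro i j rl cl Y hfin hbox hncard hlt
  have hsf : (steps Y).Finite := hfin.subset (fun p hp => hp.1)
  by_cases hY0 : Y = ∅
  · exact ⟨∅, by simp, by simp [hY0], by intro x; simp, by intro x; simp⟩
  -- Y has a step
  have hstep_ex : (steps Y).Nonempty := by
    obtain ⟨p, hp, hmax⟩ := Set.Finite.exists_maximalFor (fun p : ℕ × ℕ => p.1 + p.2) Y hfin
      (Set.nonempty_iff_ne_empty.mpr hY0)
    refine ⟨p, hp, fun hcon => ?_, fun hcon => ?_⟩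
    · have heq : p.1 + 1 + p.2 ≤ p.1 + p.2 :=
        hmax (j := (p.1 + 1, p.2)) hcon (by show p.1 + p.2 ≤ p.1 + 1 + p.2; omega)
      omega
    · have heq : p.1 + (p.2 + 1) ≤ p.1 + p.2 :=
        hmax (j := (p.1, p.2 + 1)) hcon (by show p.1 + p.2 ≤ p.1 + (p.2 + 1); omega)
      omega
  have hn1 : 1 ≤ n := by
    have := (Set.ncard_pos hsf).mpr hstep_ex
    omega
  rcases Nat.eq_zero_or_pos i with rfl | hi0
  · rw [Nat.zero_add, Nat.choose_zero_right] at hlt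
    omega
  rcases Nat.eq_zero_or_pos j with rfl | hj0
  · rw [Nat.add_zero, Nat.choose_self] at hlt
    omega
  obtain ⟨ii, rfl⟩ : ∃ ii, i = ii + 1 := ⟨i - 1, by omega⟩
  obtain ⟨jj, rfl⟩ : ∃ jj, j = jj + 1 := ⟨j - 1, by omega⟩
  set m := min ((ii + (jj + 1)).choose ii - 1) (n - 1) with hmdef
  have hmn : m < n := by omega
  obtain ⟨p, hpstep, hpcnt⟩ := exists_step_rank hbox hsf (show m < (steps Y).ncard by omega)
  have hbp := hbox.1 p hpstep.1
  have hfact1 : ∀ q ∈ Y, p.2 < q.2 → q.1 < p.1 := by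
    intro q hq hlt2
    by_contra hcon
    push_neg at hcon
    exact hpstep.2.2 (hbox.closed q.1 q.2 p.1 (p.2 + 1)
      (by simpa using hq) hbp.1 hcon (by omega) (by omega))
  have hfact2 : ∀ q ∈ Y, p.1 < q.1 → q.2 < p.2 := by
    intro q hq hlt2
    by_contra hcon
    push_neg at hcon
    exact hpstep.2.1 (hbox.closed q.1 q.2 (p.1 + 1) p.2
      (by simpa using hq) (by omega) (by omega) hbp.2 hcon)
  set Y1 : Set (ℕ × ℕ) := {q | q ∈ Y ∧ p.2 < q.2} with hY1def
  set Y2 : Set (ℕ × ℕ) := {q | q ∈ Y ∧ p.1 < q.1} with hY2def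
  have hY1sub : Y1 ⊆ Y := fun q hq => hq.1
  have hY2sub : Y2 ⊆ Y := fun q hq => hq.1
  have hbox1 : BoxLike rl p.2 Y1 := by
    constructor
    · intro q hq
      exact ⟨(hbox.1 q hq.1).1, hq.2⟩
    · intro q hq
      constructor
      · intro hlt2
        exact ⟨(hbox.2 q hq.1).1 hlt2, hq.2⟩
      · intro hlt2
        have hc : cl + 1 < q.2 := by
          have := (hbox.1 q hq.1).2
          omega
        refine ⟨(hbox.2 q hq.1).2 hc, ?_⟩
        show p.2 < q.2 - 1
        omega
  have hbox2 : BoxLike p.1 cl Y2 := by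
    constructor
    · intro q hq
      exact ⟨hq.2, (hbox.1 q hq.1).2⟩
    · intro q hq
      constructor
      · intro hlt2
        have hc : rl + 1 < q.1 := by
          have := (hbox.1 q hq.1).1
          omega
        refine ⟨(hbox.2 q hq.1).1 hc, ?_⟩
        show p.1 < q.1 - 1
        omega
      · intro hlt2
        exact ⟨(hbox.2 q hq.1).2 hlt2, hq.2⟩
  have hsteps1 : steps Y1 = {q ∈ steps Y | p.2 < q.2} := by
    ext q
    constructor
    · rintro ⟨⟨hqY, hqc⟩, h1, h2⟩
      exact ⟨⟨hqY, fun hcon => h1 ⟨hcon, hqc⟩, fun hcon => h2 ⟨hcon, by omega⟩⟩, hqc⟩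
    · rintro ⟨⟨hqY, h1, h2⟩, hqc⟩
      exact ⟨⟨hqY, hqc⟩, fun hc => h1 hc.1, fun hc => h2 hc.1⟩
  have hsteps2 : steps Y2 = {q ∈ steps Y | p.1 < q.1} := by
    ext q
    constructor
    · rintro ⟨⟨hqY, hqc⟩, h1, h2⟩
      exact ⟨⟨hqY, fun hcon => h1 ⟨hcon, by omega⟩, fun hcon => h2 ⟨hcon, hqc⟩⟩, hqc⟩
    · rintro ⟨⟨hqY, h1, h2⟩, hqc⟩
      exact ⟨⟨hqY, hqc⟩, fun hc => h1 hc.1, fun hc => h2 hc.1⟩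
  have hcnt1 : (steps Y1).ncard = m := by
    rw [hsteps1]
    have h1 : {q ∈ steps Y | p.2 < q.2} = {q ∈ steps Y | q.1 < p.1} := by
      ext q
      constructor
      · rintro ⟨hq, hcol⟩
        exact ⟨hq, hfact1 q hq.1 hcol⟩
      · rintro ⟨hq, hrow⟩
        exact ⟨hq, step_antichain hbox hq hpstep hrow⟩
    have h2 : {q ∈ steps Y | q.1 < p.1} = ↑(hsf.toFinset.filter (fun q => q.1 < p.1)) := by
      ext q
      simp [Set.Finite.mem_toFinset]
    rw [h1, h2, Set.ncard_coe_finset, hpcnt]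
  have hcnt2 : (steps Y2).ncard = n - 1 - m := by
    rw [hsteps2]
    have h2 : {q ∈ steps Y | p.1 < q.1} = ↑(hsf.toFinset.filter (fun q => p.1 < q.1)) := by
      ext q
      simp [Set.Finite.mem_toFinset]
    rw [h2, Set.ncard_coe_finset]
    have hpart := Finset.card_filter_add_card_filter_not
      (s := hsf.toFinset) (p := fun q => q.1 < p.1)
    have hcardF : hsf.toFinset.card = n := by
      rw [← Set.ncard_eq_toFinset_card _ hsf, hncard]
    have hins : hsf.toFinset.filter (fun q => ¬ q.1 < p.1)
        = insert p (hsf.toFinset.filter (fun q => p.1 < q.1)) := by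
      ext q
      simp only [Finset.mem_filter, Finset.mem_insert, Set.Finite.mem_toFinset]
      constructor
      · rintro ⟨hq, hge⟩
        rcases eq_or_lt_of_le (not_lt.mp hge) with heq | hlt'
        · exact Or.inl (step_row_inj hbox hq hpstep heq.symm)
        · exact Or.inr ⟨hq, hlt'⟩
      · rintro (rfl | ⟨hq, hlt'⟩)
        · exact ⟨hpstep, by omega⟩
        · exact ⟨hq, by omega⟩
    have hpnot : p ∉ hsf.toFinset.filter (fun q => p.1 < q.1) := by
      simp
    rw [hins, Finset.card_insert_of_notMem hpnot, hpcnt] at hpart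
    omega
  set R0 : Set (ℕ × ℕ) := Set.Icc (rl + 1) p.1 ×ˢ Set.Icc (cl + 1) p.2 with hR0def
  have hR0sub : R0 ⊆ Y := by
    rintro ⟨a, b⟩ hab
    simp only [hR0def, Set.mem_prod, Set.mem_Icc] at hab
    exact hbox.closed p.1 p.2 a b (by simpa using hpstep.1) (by omega) hab.1.2 (by omega) hab.2.2
  have hdecomp : ∀ q ∈ Y, q ∈ R0 ∨ q ∈ Y1 ∨ q ∈ Y2 := by
    intro q hq
    by_cases h1 : p.2 < q.2
    · exact Or.inr (Or.inl ⟨hq, h1⟩)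
    by_cases h2 : p.1 < q.1
    · exact Or.inr (Or.inr ⟨hq, h2⟩)
    · left
      have := hbox.1 q hq
      simp only [hR0def, Set.mem_prod, Set.mem_Icc]
      omega
  have hpas : (ii + 1 + (jj + 1)).choose (ii + 1)
      = (ii + (jj + 1)).choose ii + (ii + (jj + 1)).choose (ii + 1) := by
    have h1 : ii + 1 + (jj + 1) = (ii + (jj + 1)) + 1 := by omega
    rw [h1, Nat.choose_succ_succ]
  have hm1lt : m < (ii + (jj + 1)).choose ii := by
    have := Nat.choose_pos (show ii ≤ ii + (jj + 1) by omega)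
    omega
  have hm2lt : n - 1 - m < (ii + 1 + jj).choose (ii + 1) := by
    have e1 : ii + 1 + jj = ii + (jj + 1) := by omega
    rw [e1]
    have hp2 := Nat.choose_pos (show ii + 1 ≤ ii + (jj + 1) by omega)
    omega
  obtain ⟨C1, hC1r, hC1u, hC1row, hC1col⟩ :=
    IH m hmn ii (jj + 1) rl p.2 Y1 (hfin.subset hY1sub) hbox1 hcnt1 hm1lt
  obtain ⟨C2, hC2r, hC2u, hC2row, hC2col⟩ :=
    IH (n - 1 - m) (by omega) (ii + 1) jj p.1 cl Y2 (hfin.subset hY2sub) hbox2 hcnt2 hm2lt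
  refine ⟨insert R0 (C1 ∪ C2), ?_, ?_, ?_, ?_⟩
  · -- rectangles
    intro R hR
    rcases Finset.mem_insert.mp hR with rfl | hR'
    · exact ⟨⟨_, _, rfl⟩, hR0sub⟩
    rcases Finset.mem_union.mp hR' with hmem | hmem
    · obtain ⟨hex, hsub⟩ := hC1r R hmem
      exact ⟨hex, hsub.trans hY1sub⟩
    · obtain ⟨hex, hsub⟩ := hC2r R hmem
      exact ⟨hex, hsub.trans hY2sub⟩
  · -- union
    apply Set.Subset.antisymm
    · intro z hz
      simp only [Set.mem_iUnion] at hz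
      obtain ⟨R, hRC, hzR⟩ := hz
      rcases Finset.mem_insert.mp hRC with rfl | hR'
      · exact hR0sub hzR
      rcases Finset.mem_union.mp hR' with hmem | hmem
      · exact hY1sub ((hC1r R hmem).2 hzR)
      · exact hY2sub ((hC2r R hmem).2 hzR)
    · intro z hz
      simp only [Set.mem_iUnion]
      rcases hdecomp z hz with h | h | h
      · exact ⟨R0, Finset.mem_insert_self _ _, h⟩
      · rw [← hC1u] at h
        simp only [Set.mem_iUnion] at h
        obtain ⟨R, hRC, hzR⟩ := h
        exact ⟨R, Finset.mem_insert_of_mem (Finset.mem_union_left _ hRC), hzR⟩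
      · rw [← hC2u] at h
        simp only [Set.mem_iUnion] at h
        obtain ⟨R, hRC, hzR⟩ := h
        exact ⟨R, Finset.mem_insert_of_mem (Finset.mem_union_right _ hRC), hzR⟩
  · -- row locality
    intro a
    by_cases ha : a ≤ p.1
    · have hsub2 : (insert R0 (C1 ∪ C2)).filter (fun R => UsesRow R a)
          ⊆ insert R0 (C1.filter (fun R => UsesRow R a)) := by
        intro R hR
        rw [Finset.mem_filter] at hR
        obtain ⟨hmem, hrow⟩ := hR
        rcases Finset.mem_insert.mp hmem with rfl | hmem'
        · exact Finset.mem_insert_self _ _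
        rcases Finset.mem_union.mp hmem' with hm' | hm'
        · exact Finset.mem_insert_of_mem (Finset.mem_filter.mpr ⟨hm', hrow⟩)
        · exfalso
          obtain ⟨t0, ht0⟩ := hrow
          have hmm : (a, t0) ∈ Y2 := (hC2r R hm').2 ht0
          have : p.1 < a := hmm.2
          omega
      calc ((insert R0 (C1 ∪ C2)).filter (fun R => UsesRow R a)).card
          ≤ (insert R0 (C1.filter (fun R => UsesRow R a))).card := Finset.card_le_card hsub2
        _ ≤ (C1.filter (fun R => UsesRow R a)).card + 1 := Finset.card_insert_le _ _
        _ ≤ ii + 1 := by have := hC1row a; omega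
    · have hsub2 : (insert R0 (C1 ∪ C2)).filter (fun R => UsesRow R a)
          ⊆ C2.filter (fun R => UsesRow R a) := by
        intro R hR
        rw [Finset.mem_filter] at hR
        obtain ⟨hmem, hrow⟩ := hR
        rcases Finset.mem_insert.mp hmem with rfl | hmem'
        · exfalso
          obtain ⟨t0, ht0⟩ := hrow
          simp only [hR0def, Set.mem_prod, Set.mem_Icc] at ht0
          omega
        rcases Finset.mem_union.mp hmem' with hm' | hm'
        · exfalso
          obtain ⟨t0, ht0⟩ := hrow
          have hmm : (a, t0) ∈ Y1 := (hC1r R hm').2 ht0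
          have := hfact1 _ hmm.1 hmm.2
          simp at this
          omega
        · exact Finset.mem_filter.mpr ⟨hm', hrow⟩
      calc ((insert R0 (C1 ∪ C2)).filter (fun R => UsesRow R a)).card
          ≤ (C2.filter (fun R => UsesRow R a)).card := Finset.card_le_card hsub2
        _ ≤ ii + 1 := hC2row a
  · -- column locality
    intro b
    by_cases hb : b ≤ p.2
    · have hsub2 : (insert R0 (C1 ∪ C2)).filter (fun R => UsesCol R b)
          ⊆ insert R0 (C2.filter (fun R => UsesCol R b)) := by
        intro R hR
        rw [Finset.mem_filter] at hR
        obtain ⟨hmem, hcol⟩ := hR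
        rcases Finset.mem_insert.mp hmem with rfl | hmem'
        · exact Finset.mem_insert_self _ _
        rcases Finset.mem_union.mp hmem' with hm' | hm'
        · exfalso
          obtain ⟨s0, hs0⟩ := hcol
          have hmm : (s0, b) ∈ Y1 := (hC1r R hm').2 hs0
          have : p.2 < b := hmm.2
          omega
        · exact Finset.mem_insert_of_mem (Finset.mem_filter.mpr ⟨hm', hcol⟩)
      calc ((insert R0 (C1 ∪ C2)).filter (fun R => UsesCol R b)).card
          ≤ (insert R0 (C2.filter (fun R => UsesCol R b))).card := Finset.card_le_card hsub2
        _ ≤ (C2.filter (fun R => UsesCol R b)).card + 1 := Finset.card_insert_le _ _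
        _ ≤ jj + 1 := by have := hC2col b; omega
    · have hsub2 : (insert R0 (C1 ∪ C2)).filter (fun R => UsesCol R b)
          ⊆ C1.filter (fun R => UsesCol R b) := by
        intro R hR
        rw [Finset.mem_filter] at hR
        obtain ⟨hmem, hcol⟩ := hR
        rcases Finset.mem_insert.mp hmem with rfl | hmem'
        · exfalso
          obtain ⟨s0, hs0⟩ := hcol
          simp only [hR0def, Set.mem_prod, Set.mem_Icc] at hs0
          omega
        rcases Finset.mem_union.mp hmem' with hm' | hm'
        · exact Finset.mem_filter.mpr ⟨hm', hcol⟩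
        · exfalso
          obtain ⟨s0, hs0⟩ := hcol
          have hmm : (s0, b) ∈ Y2 := (hC2r R hm').2 hs0
          have := hfact2 _ hmm.1 hmm.2
          simp at this
          omega
      calc ((insert R0 (C1 ∪ C2)).filter (fun R => UsesCol R b)).card
          ≤ (C1.filter (fun R => UsesCol R b)).card := Finset.card_le_card hsub2
        _ ≤ jj + 1 := hC1col b

theorem main_theorem (k r c : ℕ) (hk : 1 ≤ k) (Y : Set (ℕ × ℕ))
    (hY : IsYoung r c Y) :
    (∃ C : Finset (Set (ℕ × ℕ)), IsLocalCover k k Y C) ↔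
    (steps Y).ncard < (2 * k).choose k := by
  have hfin : Y.Finite :=
    Set.Finite.subset ((Set.finite_Icc 1 r).prod (Set.finite_Icc 1 c)) hY.1
  have hbox : BoxLike 0 0 Y := by
    constructor
    · intro p hp
      have := hY.1 hp
      simp only [Set.mem_prod, Set.mem_Icc] at this
      omega
    · intro p hp
      have h2 := hY.2 p hp
      exact ⟨fun h => h2.1 (by omega), fun h => h2.2 (by omega)⟩
  constructor
  · rintro ⟨C, hC⟩
    exact forward hbox hfin C hC
  · intro h
    obtain ⟨C, h1, h2, h3⟩ := build _ k k 0 0 Y hfin hbox rfl (by rwa [two_mul] at h)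
    exact ⟨C, ⟨h1, h2⟩, h3⟩
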